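/- arXiv:2110.02043 — 2 statements merged into one kernel-verified Lean document; each statement's English description precedes it below -/
import Mathlib

section
/- Let G be a connected multigraph obtained by subdividing each edge of a 2-connected graph H once and replacing each original vertex v by a graph B_v containing its d(v) attachment points (the 'substitution' construction). If every cycle of H has length greater than ℓ and every copy of B has no cycle of length exactly ℓ, then the resulting graph G' has no cycle of length exactly ℓ. -/
/-- The identification relation for the substitution construction: subdividing every edge
of `G` and, for adjacent `v, u`, identifying the attachment vertex `att v u` of the copy
of `B` at `v` with the attachment vertex `att u v` of the copy at `u` (both become the
subdivision vertex of the edge `vu`). -/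
def SubRel {V W : Type*} (G : SimpleGraph V) (att : V → V → W) :
    V × W → V × W → Prop :=
  fun p q => G.Adj p.1 q.1 ∧ p.2 = att p.1 q.1 ∧ q.2 = att q.1 p.1

/-- The substitution construction: one copy of `B` for each vertex of `G`, glued along
the subdivision vertices of the edges of `G` via the attachment map `att`. -/
def Subst {V W : Type*} (G : SimpleGraph V) (B : SimpleGraph W) (att : V → V → W) :
    SimpleGraph (Quot (SubRel G att)) where
  Adj x y := x ≠ y ∧ ∃ (v : V) (a b : W), B.Adj a b ∧
      x = Quot.mk (SubRel G att) (v, a) ∧ y = Quot.mk (SubRel G att) (v, b)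
  symm := ⟨by
    rintro x y ⟨hxy, v, a, b, hab, hx, hy⟩
    exact ⟨hxy.symm, v, b, a, hab.symm, hy, hx⟩⟩
  loopless := ⟨fun x h => h.1 rfl⟩

section Aux

open SimpleGraph Walk

variable {V W : Type*} {G : SimpleGraph V} {B : SimpleGraph W} {att : V → V → W}

private abbrev Hatt (G : SimpleGraph V) (att : V → V → W) : Prop :=
  ∀ v u u' : V, G.Adj v u → G.Adj v u' → att v u = att v u' → u = u'

private lemma subrel_iff (hatt : Hatt G att) {p q : V × W} :
    Quot.mk (SubRel G att) p = Quot.mk (SubRel G att) q ↔ p = q ∨ SubRel G att p q := by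
  constructor
  · intro h
    have h' := Quot.eqvGen_exact h
    clear h
    induction h' with
    | rel x y hxy => exact Or.inr hxy
    | refl x => exact Or.inl rfl
    | symm x y _ ih =>
        rcases ih with rfl | ⟨hadj, h1, h2⟩
        · exact Or.inl rfl
        · exact Or.inr ⟨hadj.symm, h2, h1⟩
    | trans x y z _ _ ih1 ih2 =>
        rcases ih1 with rfl | ⟨hadj, h1, h2⟩
        · exact ih2
        rcases ih2 with rfl | ⟨hadj', h1', h2'⟩
        · exact Or.inr ⟨hadj, h1, h2⟩
        · have hx1 : x.1 = z.1 := hatt y.1 x.1 z.1 hadj.symm hadj' (h2.symm.trans h1')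
          exact Or.inl (Prod.ext hx1 (by rw [h1, h2', hx1]))
  · rintro (rfl | h)
    · rfl
    · exact Quot.sound h

private lemma mk_copy_inj (hatt : Hatt G att) {v : V} {a b : W}
    (h : Quot.mk (SubRel G att) (v, a) = Quot.mk (SubRel G att) (v, b)) : a = b := by
  rcases (subrel_iff hatt).mp h with h | ⟨hadj, -, -⟩
  · exact congrArg Prod.snd h
  · exact absurd hadj (G.loopless.irrefl v)

private lemma mk_cross (hatt : Hatt G att) {v u : V} {a b : W} (hne : v ≠ u)
    (h : Quot.mk (SubRel G att) (v, a) = Quot.mk (SubRel G att) (u, b)) :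
    G.Adj v u ∧ a = att v u ∧ b = att u v := by
  rcases (subrel_iff hatt).mp h with h | h
  · exact absurd (congrArg Prod.fst h) hne
  · exact h

private lemma copy_unique (hatt : Hatt G att) {x y : Quot (SubRel G att)} {v u : V}
    {a b a' b' : W} (hxy : x ≠ y)
    (hxv : x = Quot.mk (SubRel G att) (v, a)) (hyv : y = Quot.mk (SubRel G att) (v, b))
    (hxu : x = Quot.mk (SubRel G att) (u, a')) (hyu : y = Quot.mk (SubRel G att) (u, b')) :
    v = u := by
  by_contra hne
  have h1 := (mk_cross hatt hne (hxv.symm.trans hxu)).2.1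
  have h2 := (mk_cross hatt hne (hyv.symm.trans hyu)).2.1
  exact hxy (by rw [hxv, hyv, h1, h2])

private lemma adj_in_copy (hatt : Hatt G att) {x y : Quot (SubRel G att)}
    (h : (Subst G B att).Adj x y) {v : V} {a b : W}
    (hx : x = Quot.mk (SubRel G att) (v, a)) (hy : y = Quot.mk (SubRel G att) (v, b)) :
    B.Adj a b := by
  obtain ⟨hne, v', a', b', hab, hx', hy'⟩ := h
  have hv : v' = v := copy_unique hatt hne hx' hy' hx hy
  subst hv
  rw [mk_copy_inj hatt (hx'.symm.trans hx)] at hab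
  rwa [mk_copy_inj hatt (hy'.symm.trans hy)] at hab

/-- step for the closed-trail-to-cycle extraction -/
private lemma closed_trail_step {u v : V} (t₂ : G.Walk u v)
    (hmem : u ∈ t₂.support.tail) (hnd : t₂.edges.Nodup) :
    ∃ w' : G.Walk u u, w'.IsTrail ∧ 0 < w'.length ∧ w'.length ≤ t₂.length := by
  classical
  cases t₂ with
  | nil => simp at hmem
  | @cons _ z _ h₂ t₃ =>
    simp only [support_cons, List.tail_cons] at hmem
    have hspec := t₃.take_spec hmem
    have hedges : t₃.edges = (t₃.takeUntil u hmem).edges ++ (t₃.dropUntil u hmem).edges := by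
      conv_lhs => rw [← hspec]
      rw [edges_append]
    simp only [edges_cons, List.nodup_cons] at hnd
    obtain ⟨hne3, hnd3⟩ := hnd
    refine ⟨Walk.cons h₂ (t₃.takeUntil u hmem), ⟨?_⟩, by simp, ?_⟩
    · rw [edges_cons, List.nodup_cons]
      refine ⟨fun hc => hne3 ?_, hnd3.sublist (hedges ▸ List.sublist_append_left _ _)⟩
      · rw [hedges]
        exact List.mem_append_left _ hc
    · simp only [length_cons, Nat.add_le_add_iff_right]
      exact length_takeUntil_le t₃ hmem

private lemma closed_trail_cycle :
    ∀ (n : ℕ) (v : V) (w : G.Walk v v), w.length ≤ n → w.IsTrail → 0 < w.length →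
    ∃ (u : V) (c : G.Walk u u), c.IsCycle ∧ c.length ≤ w.length := by
  intro n
  induction n with
  | zero => intro v w hle _ hpos; omega
  | succ n ih =>
    intro v w hle ht hpos
    by_cases hnd : w.support.tail.Nodup
    · exact ⟨v, w, ⟨⟨ht, fun h => by simp [h] at hpos⟩, hnd⟩, le_rfl⟩
    · cases w with
      | nil => simp at hpos
      | @cons _ y _ h rest =>
        classical
        simp only [support_cons, List.tail_cons] at hnd
        obtain ⟨u, hdup⟩ := List.exists_duplicate_iff_not_nodup.mpr hnd
        have hu : u ∈ rest.support := hdup.mem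
        have hcount : 2 ≤ rest.support.count u := List.duplicate_iff_two_le_count.mp hdup
        have hsupp : rest.support
            = (rest.takeUntil u hu).support ++ (rest.dropUntil u hu).support.tail := by
          conv_lhs => rw [← rest.take_spec hu]
          rw [support_append]
        have hc1 : (rest.takeUntil u hu).support.count u = 1 :=
          rest.count_support_takeUntil_eq_one hu
        have hmem : u ∈ (rest.dropUntil u hu).support.tail := by
          rw [hsupp, List.count_append, hc1] at hcount
          exact List.count_pos_iff.mp (by omega)
        have hedges : rest.edges
            = (rest.takeUntil u hu).edges ++ (rest.dropUntil u hu).edges := by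
          conv_lhs => rw [← rest.take_spec hu]
          rw [edges_append]
        have hnd2 : (rest.dropUntil u hu).edges.Nodup := by
          have := ht.edges_nodup
          rw [edges_cons, hedges] at this
          exact ((List.nodup_cons.mp this).2).of_append_right
        obtain ⟨w', hw't, hw'pos, hw'le⟩ := closed_trail_step _ hmem hnd2
        have hlen2 : (rest.dropUntil u hu).length ≤ rest.length := by
          have : (rest.takeUntil u hu).length + (rest.dropUntil u hu).length
              = rest.length := by
            conv_rhs => rw [← rest.take_spec hu]
            rw [length_append]
          omega
        obtain ⟨u', c, hc, hcle⟩ := ih u w' (by simp only [length_cons] at hle; omega) hw't hw'pos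
        exact ⟨u', c, hc, by simp only [length_cons]; omega⟩


private lemma trail_of_darts_map_nodup {v u : V} {p : G.Walk v u}
    (h : (p.darts.map
      (fun d => Quot.mk (SubRel G att) (d.fst, att d.fst d.snd))).Nodup) :
    p.IsTrail := by
  constructor
  have hp : p.edges = p.darts.map SimpleGraph.Dart.edge := rfl
  rw [hp, List.Nodup, List.pairwise_map]
  rw [List.Nodup, List.pairwise_map] at h
  refine h.imp ?_
  intro d d' hne heq
  apply hne
  rcases (SimpleGraph.dart_edge_eq_iff d d').mp heq with rfl | rfl
  · rfl
  · exact Quot.sound ⟨d'.adj.symm, rfl, rfl⟩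


private lemma project (hatt : Hatt G att) {x y : Quot (SubRel G att)}
    (w : (Subst G B att).Walk x y) :
    ∀ (v : V) (a : W), x = Quot.mk (SubRel G att) (v, a) →
    ∃ (u : V) (p : G.Walk v u) (b : W) (ts : List (Quot (SubRel G att))),
      y = Quot.mk (SubRel G att) (u, b) ∧
      p.darts.map (fun d => Quot.mk (SubRel G att) (d.fst, att d.fst d.snd)) = ts ∧
      ts.Sublist w.support.dropLast ∧
      (p.length = 0 → u = v ∧ ∀ d ∈ w.darts, ∃ a' b' : W,
        d.fst = Quot.mk (SubRel G att) (v, a') ∧ d.snd = Quot.mk (SubRel G att) (v, b')) := by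
  induction w with
  | nil =>
    intro v a hx
    exact ⟨v, Walk.nil, a, [], hx, rfl, by simp, fun _ => ⟨rfl, by simp⟩⟩
  | @cons x₀ x₁ _ h w' ih =>
    intro v a hx
    obtain ⟨hne, v', a', b', hab, hx', hx₁⟩ := id h
    have hdrop : (Walk.cons h w').support.dropLast = x₀ :: w'.support.dropLast := by
      conv_lhs => rw [support_cons, w'.support_eq_cons, List.dropLast_cons₂]
      rw [← w'.support_eq_cons]
    by_cases hv : v' = v
    · subst hv
      have ha' : a' = a := mk_copy_inj hatt (hx'.symm.trans hx)
      obtain ⟨u, p, b, ts, hy, hmap, hsub, hnil⟩ := ih v' b' hx₁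
      refine ⟨u, p, b, ts, hy, hmap, ?_, ?_⟩
      · rw [hdrop]
        exact hsub.trans (List.sublist_cons_self _ _)
      · intro hp0
        obtain ⟨huv, hall⟩ := hnil hp0
        refine ⟨huv, ?_⟩
        intro d hd
        rw [darts_cons, List.mem_cons] at hd
        rcases hd with rfl | hd
        · exact ⟨a', b', hx', hx₁⟩
        · exact hall d hd
    · have hxx : Quot.mk (SubRel G att) (v, a) = Quot.mk (SubRel G att) (v', a') :=
        hx.symm.trans hx'
      obtain ⟨hadj, ha, ha'⟩ := mk_cross hatt (Ne.symm hv) hxx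
      obtain ⟨u, p, b, ts, hy, hmap, hsub, hnil⟩ := ih v' b' hx₁
      refine ⟨u, Walk.cons hadj p, b, x₀ :: ts, hy, ?_, ?_, by simp⟩
      · rw [darts_cons, List.map_cons, hmap]
        congr 1
        rw [hx, ha]
      · rw [hdrop]
        exact hsub.cons₂ x₀

private lemma lift (hatt : Hatt G att) {x y : Quot (SubRel G att)}
    (w : (Subst G B att).Walk x y) :
    ∀ (v : V) (a b : W), x = Quot.mk (SubRel G att) (v, a) →
    y = Quot.mk (SubRel G att) (v, b) →
    (∀ d ∈ w.darts, ∃ a' b' : W,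
        d.fst = Quot.mk (SubRel G att) (v, a') ∧ d.snd = Quot.mk (SubRel G att) (v, b')) →
    ∃ p : B.Walk a b, p.length = w.length ∧
      p.support.map (fun c => Quot.mk (SubRel G att) (v, c)) = w.support ∧
      p.edges.map (Sym2.map (fun c => Quot.mk (SubRel G att) (v, c))) = w.edges := by
  induction w with
  | nil =>
    intro v a b hx hy hall
    obtain rfl : a = b := mk_copy_inj hatt (hx.symm.trans hy)
    exact ⟨Walk.nil, rfl, by simp [hx.symm], by simp⟩
  | @cons x₀ x₁ _ h w' ih =>
    intro v a b hx hy hall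
    obtain ⟨a₀, b₀, hx0, hx10⟩ := hall _ (by rw [darts_cons]; exact List.mem_cons_self)
    have ha : a₀ = a := mk_copy_inj hatt (hx0.symm.trans hx)
    subst ha
    have hBadj : B.Adj a₀ b₀ := adj_in_copy hatt h hx0 hx10
    obtain ⟨p, hlen, hsup, hedg⟩ := ih v b₀ b hx10 hy
      (fun d hd => hall d (by rw [darts_cons]; exact List.mem_cons_of_mem _ hd))
    refine ⟨Walk.cons hBadj p, by simp [hlen], ?_, ?_⟩
    · rw [support_cons, support_cons, List.map_cons, hsup, ← hx]
    · rw [edges_cons, edges_cons, List.map_cons, hedg, Sym2.map_pair_eq, ← hx, ← hx10]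

end Aux

open SimpleGraph Walk

theorem subst_no_ell_cycle {V W : Type*} (G : SimpleGraph V) (B : SimpleGraph W)
    (att : V → V → W) (ℓ : ℕ)
    (hatt : ∀ v u u' : V, G.Adj v u → G.Adj v u' → att v u = att v u' → u = u')
    (hconn : G.Connected)
    (h2conn : ∀ v : V, (((⊤ : G.Subgraph).deleteVerts {v}).coe).Connected)
    (hGcyc : ∀ (v : V) (c : G.Walk v v), c.IsCycle → ℓ < c.length)
    (hBcyc : ∀ (w : W) (c : B.Walk w w), c.IsCycle → c.length ≠ ℓ) :
    ∀ (x : Quot (SubRel G att)) (c : (Subst G B att).Walk x x),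
      c.IsCycle → c.length ≠ ℓ := by
  intro x c hcyc
  cases c with
  | nil => exact absurd rfl hcyc.ne_nil
  | @cons _ x₁ _ h c' =>
    obtain ⟨hne, v, a, b, hab, hx, hx₁⟩ := id h
    obtain ⟨u, p, bw, ts, hyx, hmap, hsub, hnil⟩ := project hatt c' v b hx₁
    have hndtail : c'.support.Nodup := by
      have := hcyc.support_nodup
      rwa [support_cons, List.tail_cons] at this
    have hDlen : c'.support.dropLast.length = c'.length := by
      rw [List.length_dropLast, length_support]
      omega
    have hDnd : c'.support.dropLast.Nodup := hndtail.sublist (List.dropLast_sublist _)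
    have hts_nd : ts.Nodup := hDnd.sublist hsub
    have hxD : x ∉ c'.support.dropLast := by
      intro hm
      have hgl : c'.support.getLast (by simp) = x := getLast_support c'
      have hl := List.dropLast_append_getLast (l := c'.support) (by simp)
      rw [hgl] at hl
      rw [← hl] at hndtail
      rw [List.nodup_append] at hndtail
      exact hndtail.2.2 x hm x (List.mem_singleton_self x) rfl
    have hxts : x ∉ ts := fun hm => hxD (hsub.subset hm)
    have hpts : p.length = ts.length := by
      have := congrArg List.length hmap
      simpa [length_darts] using this
    have htsle : ts.length ≤ c'.length := hDlen ▸ hsub.length_le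
    by_cases hp0 : p.length = 0
    · obtain ⟨huv, hall⟩ := hnil hp0
      have hallc : ∀ d ∈ (Walk.cons h c').darts, ∃ a' b' : W,
          d.fst = Quot.mk (SubRel G att) (v, a') ∧ d.snd = Quot.mk (SubRel G att) (v, b') := by
        intro d hd
        rw [darts_cons, List.mem_cons] at hd
        rcases hd with rfl | hd
        · exact ⟨a, b, hx, hx₁⟩
        · exact hall d hd
      obtain ⟨q, hqlen, hqsup, hqedg⟩ := lift hatt (Walk.cons h c') v a a hx hx hallc
      have hq : q.IsCycle := by
        refine ⟨⟨⟨?_⟩, ?_⟩, ?_⟩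
        · exact List.Nodup.of_map _ (hqedg ▸ hcyc.edges_nodup)
        · intro h0
          rw [h0] at hqlen
          simp at hqlen
        · apply List.Nodup.of_map (fun c => Quot.mk (SubRel G att) (v, c))
          rw [List.map_tail, hqsup, support_cons, List.tail_cons]
          exact hndtail
      rw [← hqlen]
      exact hBcyc a q hq
    · have hstep : ∃ qv : G.Walk v v, qv.IsTrail ∧ 0 < qv.length ∧
          qv.length ≤ (Walk.cons h c').length := by
        by_cases huv : u = v
        · subst huv
          refine ⟨p, trail_of_darts_map_nodup (hmap ▸ hts_nd), by omega, ?_⟩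
          rw [length_cons]
          omega
        · obtain ⟨hadj, hb, ha2⟩ := mk_cross hatt huv (hyx.symm.trans hx)
          refine ⟨p.concat hadj, ?_, by simp [length_concat], ?_⟩
          · apply trail_of_darts_map_nodup
            rw [darts_concat, List.map_concat, hmap]
            have hux : Quot.mk (SubRel G att) (u, att u v) = x := by rw [hyx, hb]
            simp only [List.concat_eq_append, List.nodup_append]
            exact ⟨hts_nd, List.nodup_singleton _, by simpa [hux] using fun a (ha : a ∈ ts) (hax : a = x) => hxts (hax ▸ ha)⟩
          · rw [length_concat, length_cons]
            omega
      obtain ⟨qv, hqt, hqpos, hqle⟩ := hstep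
      obtain ⟨u', cyc, hcyc', hcle⟩ := closed_trail_cycle qv.length v qv le_rfl hqt hqpos
      have hgt := hGcyc u' cyc hcyc'
      omega
end

section
/- For all i ≥ 1, 2^{i+1} < (7/2)·(3 + (3^i - 1)/2)^{log_3 2}. -/
theorem moon_moser_inequality (i : ℕ) (hi : 1 ≤ i) :
    (2 : ℝ) ^ (i + 1) < (7 / 2) * ((3 : ℝ) + ((3 : ℝ) ^ i - 1) / 2) ^ Real.logb 3 2 := by
  set c : ℝ := Real.logb 3 2 with hc
  have hc0 : 0 < c := Real.logb_pos (by norm_num) (by norm_num)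
  have hc23 : c < 2 / 3 := by
    rw [hc, Real.logb, div_lt_div_iff₀ (Real.log_pos (by norm_num)) (by norm_num)]
    have h8 : Real.log 2 * 3 = Real.log 8 := by
      rw [show (8:ℝ) = 2 ^ 3 by norm_num, Real.log_pow]; push_cast; ring
    have h9 : 2 * Real.log 3 = Real.log 9 := by
      rw [show (9:ℝ) = 3 ^ 2 by norm_num, Real.log_pow]; push_cast; ring
    rw [h8, h9]
    exact Real.log_lt_log (by norm_num) (by norm_num)
  have h2c : (2:ℝ) ^ c < 7 / 4 := by
    have h1 : (2:ℝ) ^ c < (2:ℝ) ^ ((2:ℝ)/3) :=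
      (Real.rpow_lt_rpow_left_iff (by norm_num)).mpr hc23
    have hcube : ((2:ℝ) ^ ((2:ℝ)/3)) ^ (3:ℕ) = 4 := by
      rw [← Real.rpow_natCast ((2:ℝ) ^ ((2:ℝ)/3)) 3, ← Real.rpow_mul (by norm_num)]
      norm_num
    have h2 : (2:ℝ) ^ ((2:ℝ)/3) < 7 / 4 :=
      lt_of_pow_lt_pow_left₀ 3 (by norm_num) (by rw [hcube]; norm_num)
    linarith
  have h3c : (3:ℝ) ^ c = 2 := Real.rpow_logb (by norm_num) (by norm_num) (by norm_num)
  have hbase : ((3:ℝ) ^ i / 2 : ℝ) ≤ (3 : ℝ) + ((3 : ℝ) ^ i - 1) / 2 := by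
    nlinarith [pow_pos (show (0:ℝ) < 3 by norm_num) i]
  have hpos : (0:ℝ) < (3:ℝ) ^ i / 2 := by positivity
  have hmono : ((3:ℝ) ^ i / 2) ^ c ≤ ((3 : ℝ) + ((3 : ℝ) ^ i - 1) / 2) ^ c :=
    Real.rpow_le_rpow (le_of_lt hpos) hbase (le_of_lt hc0)
  have hval : ((3:ℝ) ^ i / 2) ^ c = 2 ^ i / 2 ^ c := by
    rw [Real.div_rpow (by positivity) (by norm_num), ← Real.rpow_natCast (3:ℝ) i,
      ← Real.rpow_mul (by norm_num), mul_comm, Real.rpow_mul (by norm_num), h3c,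
      Real.rpow_natCast]
  have h2cpos : (0:ℝ) < (2:ℝ) ^ c := Real.rpow_pos_of_pos (by norm_num) c
  have hpow : (0:ℝ) < (2:ℝ) ^ i := by positivity
  calc (2:ℝ) ^ (i+1) = 2 * 2 ^ i := by ring
    _ < (7/2) * (2 ^ i / 2 ^ c) := by
        rw [mul_div_assoc', lt_div_iff₀ h2cpos]
        nlinarith [mul_pos hpow (sub_pos.mpr h2c)]
    _ = (7/2) * (((3:ℝ) ^ i / 2) ^ c) := by rw [hval]
    _ ≤ _ := by nlinarith [hmono]
end
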